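/- Let n ≥ 1, let T be a subset of {1,…,n}, and define the restricted witness W_T := Σ_{i,j∈T} E_{ij} ⊗ E_{ji}, where E_{ij} are the matrix units and ⊗ is the Kronecker product. Then for every separable state σ on ℂⁿ ⊗ ℂⁿ, the real number Tr(σ·W_T) satisfies 0 ≤ Tr(σ·W_T) ≤ 1. In other words, the witness built from any subset of the basis of matrix units still satisfies the separability bounds. -/

import Mathlib

open Matrix Kronecker ComplexOrder

private lemma trace_mul_stdBasis {m : Type*} [Fintype m] [DecidableEq m]
    (A : Matrix m m ℂ) (i j : m) :
    (A * Matrix.single i j (1:ℂ)).trace = A j i := by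
  simp [Matrix.trace, Matrix.diag, Matrix.mul_apply, Matrix.single,
    ite_and, Finset.sum_ite_eq, Finset.sum_ite_eq']

private lemma trace_self_mul_conjTranspose {m : Type*} [Fintype m] (M : Matrix m m ℂ) :
    (M * Mᴴ).trace = (∑ i, ∑ j, Complex.normSq (M i j) : ℝ) := by
  simp [Matrix.trace, Matrix.diag, Matrix.mul_apply, Matrix.conjTranspose_apply,
    Complex.mul_conj]

private lemma trace_of_factor {m : Type*} [Fintype m] (A C : Matrix m m ℂ) (h : A = Cᴴ * C) :
    A.trace = (∑ i, ∑ j, Complex.normSq (C i j) : ℝ) := by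
  subst h
  rw [← Matrix.trace_mul_comm]
  simp [Matrix.trace, Matrix.diag, Matrix.mul_apply, Matrix.conjTranspose_apply,
    Complex.mul_conj]

private lemma frob_bound {m : Type*} [Fintype m] (C D : Matrix m m ℂ) :
    ∑ i, ∑ j, Complex.normSq ((C * Dᴴ) i j) ≤
      (∑ i, ∑ j, Complex.normSq (C i j)) * (∑ i, ∑ j, Complex.normSq (D i j)) := by
  rw [Finset.sum_mul_sum]
  refine Finset.sum_le_sum fun i _ => Finset.sum_le_sum fun j _ => ?_
  have hentry : (C * Dᴴ) i j = ∑ k, C i k * star (D j k) := by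
    simp [Matrix.mul_apply, Matrix.conjTranspose_apply]
  calc Complex.normSq ((C * Dᴴ) i j)
      = ‖(C * Dᴴ) i j‖ ^ 2 := (Complex.sq_norm _).symm
    _ ≤ (∑ k, ‖C i k‖ * ‖D j k‖) ^ 2 := by
        apply pow_le_pow_left₀ (norm_nonneg _)
        rw [hentry]
        refine (norm_sum_le _ _).trans (le_of_eq ?_)
        refine Finset.sum_congr rfl fun k _ => ?_
        simp [_root_.map_mul]
    _ ≤ (∑ k, ‖C i k‖ ^ 2) * (∑ k, ‖D j k‖ ^ 2) :=
        Finset.sum_mul_sq_le_sq_mul_sq _ _ _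
    _ = (∑ k, Complex.normSq (C i k)) * (∑ k, Complex.normSq (D j k)) := by
        simp [Complex.sq_norm]

private lemma psd_trace_mul_bounds {m : Type*} [Fintype m] [DecidableEq m]
    {A B : Matrix m m ℂ} (hA : A.PosSemidef) (hB : B.PosSemidef) :
    (A * B).trace.im = 0 ∧ 0 ≤ (A * B).trace.re ∧
      (A * B).trace.re ≤ A.trace.re * B.trace.re := by
  obtain ⟨C, hC⟩ : ∃ C : Matrix m m ℂ, A = Cᴴ * C := by
    open scoped MatrixOrder in
    exact (CStarAlgebra.nonneg_iff_eq_star_mul_self.mp hA.nonneg).imp fun _ h => h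
  obtain ⟨D, hD⟩ : ∃ D : Matrix m m ℂ, B = Dᴴ * D := by
    open scoped MatrixOrder in
    exact (CStarAlgebra.nonneg_iff_eq_star_mul_self.mp hB.nonneg).imp fun _ h => h
  set M := C * Dᴴ with hM
  have key : (A * B).trace = (M * Mᴴ).trace := by
    rw [hC, hD, hM, Matrix.conjTranspose_mul, Matrix.conjTranspose_conjTranspose]
    rw [show Cᴴ * C * (Dᴴ * D) = Cᴴ * (C * (Dᴴ * D)) from Matrix.mul_assoc _ _ _]
    rw [Matrix.trace_mul_comm, show C * (Dᴴ * D) * Cᴴ = C * Dᴴ * (D * Cᴴ) by noncomm_ring]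
  rw [key, trace_self_mul_conjTranspose, trace_of_factor A C hC, trace_of_factor B D hD]
  refine ⟨by simp, ?_, ?_⟩
  · rw [Complex.ofReal_re]
    exact Finset.sum_nonneg fun i _ => Finset.sum_nonneg fun j _ => Complex.normSq_nonneg _
  simpa using frob_bound C D

private lemma psd_diag {m : Type*} [Fintype m] [DecidableEq m]
    {M : Matrix m m ℂ} (h : M.PosSemidef) (i : m) :
    (M i i).im = 0 ∧ 0 ≤ (M i i).re := by
  have h2 := h.dotProduct_mulVec_nonneg (Pi.single i 1)
  simp only [dotProduct, Matrix.mulVec, Pi.star_apply, Pi.single_apply] at h2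
  have : (0 : ℂ) ≤ M i i := by
    simpa [dotProduct, Matrix.mulVec, Pi.single_apply, ite_and,
      Finset.sum_ite_eq, Finset.sum_ite_eq'] using h.dotProduct_mulVec_nonneg (Pi.single i 1)
  rw [Complex.le_def] at this
  exact ⟨this.2.symm, this.1⟩

/-- For a subset `T` of the index set, the restricted witness
`W_T := Σ_{i,j ∈ T} E_{ij} ⊗ E_{ji}` satisfies the separability bounds: for every
separable state `σ` on `ℂⁿ ⊗ ℂⁿ`, `Tr(σ·W_T)` is a real number in `[0,1]`. -/
theorem restricted_witness_separable_bounds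
    (n : ℕ) (hn : 1 ≤ n)
    (T : Finset (Fin n))
    (W : Matrix (Fin n × Fin n) (Fin n × Fin n) ℂ)
    (hW : W = ∑ i ∈ T, ∑ j ∈ T,
        (Matrix.single i j (1 : ℂ)) ⊗ₖ (Matrix.single j i (1 : ℂ)))
    (K : Type) [Fintype K]
    (p : K → ℝ) (hp : ∀ k, 0 ≤ p k) (hpsum : ∑ k, p k = 1)
    (σ₁ σ₂ : K → Matrix (Fin n) (Fin n) ℂ)
    (h₁pos : ∀ k, (σ₁ k).PosSemidef) (h₁tr : ∀ k, (σ₁ k).trace = 1)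
    (h₂pos : ∀ k, (σ₂ k).PosSemidef) (h₂tr : ∀ k, (σ₂ k).trace = 1)
    (σ : Matrix (Fin n × Fin n) (Fin n × Fin n) ℂ)
    (hσ : σ = ∑ k : K, (p k : ℂ) • ((σ₁ k) ⊗ₖ (σ₂ k))) :
    (σ * W).trace.im = 0 ∧ 0 ≤ (σ * W).trace.re ∧ (σ * W).trace.re ≤ 1 := by
  classical
  set c : ↥T → Fin n := Subtype.val with hc
  set A : K → Matrix ↥T ↥T ℂ := fun k => (σ₁ k).submatrix c c with hA
  set B : K → Matrix ↥T ↥T ℂ := fun k => (σ₂ k).submatrix c c with hB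
  -- Step 1: trace computation
  have htr : (σ * W).trace = ∑ k, (p k : ℂ) * ((A k * B k).trace) := by
    rw [hσ, hW, Finset.sum_mul, Matrix.trace_sum]
    refine Finset.sum_congr rfl fun k _ => ?_
    rw [Matrix.smul_mul, Matrix.trace_smul, smul_eq_mul]
    congr 1
    have hAB : (A k * B k).trace = ∑ i : ↥T, ∑ j : ↥T, σ₁ k ↑i ↑j * σ₂ k ↑j ↑i := by
      simp [Matrix.trace, Matrix.diag, Matrix.mul_apply, hA, hB, hc,
        Matrix.submatrix_apply]
    have hLHS : ((σ₁ k ⊗ₖ σ₂ k) * ∑ i ∈ T, ∑ j ∈ T,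
        (Matrix.single i j (1:ℂ)) ⊗ₖ (Matrix.single j i (1:ℂ))).trace
        = ∑ i ∈ T, ∑ j ∈ T, σ₁ k j i * σ₂ k i j := by
      rw [Finset.mul_sum, Matrix.trace_sum]
      refine Finset.sum_congr rfl fun i _ => ?_
      rw [Finset.mul_sum, Matrix.trace_sum]
      refine Finset.sum_congr rfl fun j _ => ?_
      rw [← Matrix.mul_kronecker_mul, Matrix.trace_kronecker,
        trace_mul_stdBasis, trace_mul_stdBasis]
    have hcoe : ∑ i : ↥T, ∑ j : ↥T, σ₁ k ↑i ↑j * σ₂ k ↑j ↑i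
        = ∑ i ∈ T, ∑ j ∈ T, σ₁ k i j * σ₂ k j i := by
      rw [Finset.sum_coe_sort T (fun i => ∑ j : ↥T, σ₁ k i ↑j * σ₂ k ↑j i)]
      exact Finset.sum_congr rfl fun i _ => Finset.sum_coe_sort T (fun j => σ₁ k i j * σ₂ k j i)
    rw [hLHS, hAB, hcoe, Finset.sum_comm]
  -- Step 2: properties per k
  have hAk : ∀ k, (A k).PosSemidef := fun k => (h₁pos k).submatrix c
  have hBk : ∀ k, (B k).PosSemidef := fun k => (h₂pos k).submatrix c
  have trace_sub : ∀ (M : Matrix (Fin n) (Fin n) ℂ), (M.submatrix c c).trace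
      = ∑ i ∈ T, M i i := by
    intro M
    rw [Matrix.trace]
    exact Finset.sum_coe_sort T (fun i => M i i)
  have htrA : ∀ k, 0 ≤ (A k).trace.re ∧ (A k).trace.re ≤ 1 := by
    intro k
    rw [hA, trace_sub, Complex.re_sum]
    constructor
    · exact Finset.sum_nonneg fun i _ => (psd_diag (h₁pos k) i).2
    · have h1 : (∑ i : Fin n, ((σ₁ k) i i).re) = 1 := by
        have := congrArg Complex.re (h₁tr k)
        simp only [Matrix.trace, Matrix.diag, Complex.re_sum, Complex.one_re] at this
        exact this
      rw [← h1]
      exact Finset.sum_le_sum_of_subset_of_nonneg (Finset.subset_univ T)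
        (fun i _ _ => (psd_diag (h₁pos k) i).2)
  have htrB : ∀ k, 0 ≤ (B k).trace.re ∧ (B k).trace.re ≤ 1 := by
    intro k
    rw [hB, trace_sub, Complex.re_sum]
    constructor
    · exact Finset.sum_nonneg fun i _ => (psd_diag (h₂pos k) i).2
    · have h1 : (∑ i : Fin n, ((σ₂ k) i i).re) = 1 := by
        have := congrArg Complex.re (h₂tr k)
        simp only [Matrix.trace, Matrix.diag, Complex.re_sum, Complex.one_re] at this
        exact this
      rw [← h1]
      exact Finset.sum_le_sum_of_subset_of_nonneg (Finset.subset_univ T)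
        (fun i _ _ => (psd_diag (h₂pos k) i).2)
  have hbounds : ∀ k, ((A k * B k).trace).im = 0 ∧ 0 ≤ ((A k * B k).trace).re ∧
      ((A k * B k).trace).re ≤ 1 := by
    intro k
    obtain ⟨him, hre0, hre1⟩ := psd_trace_mul_bounds (hAk k) (hBk k)
    exact ⟨him, hre0, hre1.trans (mul_le_one₀ (htrA k).2 (htrB k).1 (htrB k).2)⟩
  -- Step 3: assemble
  rw [htr]
  rw [Complex.im_sum, Complex.re_sum]
  simp only [Complex.mul_im, Complex.mul_re, Complex.ofReal_re, Complex.ofReal_im,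
    zero_mul, mul_zero, add_zero, sub_zero, zero_add]
  refine ⟨?_, ?_, ?_⟩
  · exact Finset.sum_eq_zero fun k _ => by rw [(hbounds k).1, mul_zero]
  · exact Finset.sum_nonneg fun k _ => mul_nonneg (hp k) (hbounds k).2.1
  · calc ∑ k, p k * ((A k * B k).trace).re ≤ ∑ k, p k := by
          refine Finset.sum_le_sum fun k _ => ?_
          simpa using mul_le_of_le_one_right (hp k) (hbounds k).2.2
      _ = 1 := hpsum
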